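/- Observationally equivalent physical models need not be isomorphic: the computable physical models ({0,1}, {α}) with α(s) = s, and ({0,1,2}, {β}) with β(s) = ⌊s/2⌋, are observationally equivalent but not isomorphic. -/
import Mathlib


universe u v w

/-- Isomorphism of physical models: bijections `φ : S → T` and `ψ : A → B` with
`α(s) = ψ(α)(φ(s))` for all `s ∈ S` and all `α ∈ A`. -/
def Isomorphic {σ : Type*} {τ : Type*} {V : Type*}
    (S : Set σ) (A : Set (σ → V)) (T : Set τ) (B : Set (τ → V)) : Prop :=
  ∃ (φ : σ → τ) (ψ : (σ → V) → τ → V),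
    Set.BijOn φ S T ∧ Set.BijOn ψ A B ∧ ∀ s ∈ S, ∀ α ∈ A, α s = ψ α (φ s)

/-- A physical model `(S, A)` is reduced iff any two distinct states are separated by
some observable quantity. -/
def Reduced {σ : Type*} {V : Type*} (S : Set σ) (A : Set (σ → V)) : Prop :=
  ∀ s₁ ∈ S, ∀ s₂ ∈ S, s₁ ≠ s₂ → ∃ α ∈ A, α s₁ ≠ α s₂

/-- An epimorphism from `(S, A)` to `(T, B)`: a surjection `φ` from `S` onto `T` and a
bijection `ψ : A → B` with `α(s) = ψ(α)(φ(s))` for all `s ∈ S` and `α ∈ A`. -/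
def Epimorphism {σ : Type*} {τ : Type*} {V : Type*}
    (S : Set σ) (A : Set (σ → V)) (T : Set τ) (B : Set (τ → V)) : Prop :=
  ∃ (φ : σ → τ) (ψ : (σ → V) → τ → V),
    Set.MapsTo φ S T ∧ Set.SurjOn φ S T ∧ Set.BijOn ψ A B ∧
    ∀ s ∈ S, ∀ α ∈ A, α s = ψ α (φ s)

/-- Two physical models are observationally equivalent iff there exist epimorphisms from
each of them to a common reduced physical model. -/
def ObsEquiv {σ₁ : Type u} {σ₂ : Type v} {V : Type w}
    (S₁ : Set σ₁) (A₁ : Set (σ₁ → V)) (S₂ : Set σ₂) (A₂ : Set (σ₂ → V)) : Prop :=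
  ∃ (τ : Type (max u v w)) (T : Set τ) (B : Set (τ → V)),
    Reduced T B ∧ Epimorphism S₁ A₁ T B ∧ Epimorphism S₂ A₂ T B

/-- Observationally equivalent physical models need not be isomorphic:
the computable physical models `({0,1}, {α})` with `α(s) = s` and `({0,1,2}, {β})` with
`β(s) = ⌊s/2⌋` are observationally equivalent but not isomorphic. -/
theorem obsEquiv_not_isomorphic :
    ObsEquiv ({0, 1} : Set ℕ) ({fun s : ℕ => s} : Set (ℕ → ℕ))
        ({0, 1, 2} : Set ℕ) ({fun s : ℕ => s / 2} : Set (ℕ → ℕ)) ∧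
      ¬ Isomorphic ({0, 1} : Set ℕ) ({fun s : ℕ => s} : Set (ℕ → ℕ))
        ({0, 1, 2} : Set ℕ) ({fun s : ℕ => s / 2} : Set (ℕ → ℕ)) := by

  constructor
  · -- observational equivalence via the reduced model ({0,1}, {id})
    refine ⟨ℕ, {0, 1}, {fun n : ℕ => n}, ?_, ?_, ?_⟩
    · intro s₁ h₁ s₂ h₂ hne
      exact ⟨fun n => n, rfl, hne⟩
    · refine ⟨id, fun _ => fun n => n, ?_, ?_, ?_, ?_⟩
      · intro x hx; exact hx
      · intro x hx; exact ⟨x, hx, rfl⟩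
      · refine ⟨?_, ?_, ?_⟩
        · intro x hx; simp
        · intro x hx y hy _; simp at hx hy; subst hx; subst hy; rfl
        · intro x hx; exact ⟨fun n => n, rfl, by simpa using hx.symm⟩
      · intro s hs α hα
        simp only [Set.mem_singleton_iff] at hα
        subst hα; rfl
    · refine ⟨fun n => n / 2, fun _ => fun n => n, ?_, ?_, ?_, ?_⟩
      · intro x hx
        rcases hx with rfl | rfl | rfl <;> simp
      · intro x hx
        rcases hx with rfl | rfl
        · exact ⟨0, by simp, by simp⟩
        · exact ⟨2, by simp, by simp⟩
      · refine ⟨?_, ?_, ?_⟩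
        · intro x hx; simp
        · intro x hx y hy _; simp at hx hy; subst hx; subst hy; rfl
        · intro x hx; exact ⟨fun n => n / 2, rfl, by simpa using hx.symm⟩
      · intro s hs α hα
        simp only [Set.mem_singleton_iff] at hα
        subst hα; rfl
  · rintro ⟨φ, ψ, ⟨_, hinj, hsurj⟩, _, _⟩
    obtain ⟨a, ha, hfa⟩ := hsurj (show (0:ℕ) ∈ ({0,1,2} : Set ℕ) by simp)
    obtain ⟨b, hb, hfb⟩ := hsurj (show (1:ℕ) ∈ ({0,1,2} : Set ℕ) by simp)
    obtain ⟨c, hc, hfc⟩ := hsurj (show (2:ℕ) ∈ ({0,1,2} : Set ℕ) by simp)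
    rcases ha with rfl | rfl <;> rcases hb with rfl | rfl <;> rcases hc with rfl | rfl <;>
      omega
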